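/- Let (X, 𝓕, m) be a probability space, T an m-nonsingular transformation whose Perron–Frobenius operator 𝓛_T is asymptotically periodic with data s, r(i), g_{i,j}, λ_{i,j}; set g_i = (1/r(i)) Σ_{j=1}^{r(i)} g_{i,j} and A_i = {g_i > 0}. Let A ∈ 𝓕 with m(A) > 0 and A ⊆ T⁻¹(A). Then for every i ∈ {1,…,s}, either m(A_i ∩ A) = 0 or m(A_i \ A) = 0; moreover m(A ∩ ⋃_{i=1}^{s} A_i) > 0. -/

import Mathlib

open MeasureTheory Filter Topology

noncomputable section

/-- `L` is the Perron–Frobenius operator of the `μ`-nonsingular transformation `T`: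
for every integrable `f`, `L f` is integrable and `∫_A L f dμ = ∫_{T⁻¹ A} f dμ`
for every measurable set `A`. -/
def IsPF {α : Type*} [MeasurableSpace α] (μ : Measure α) (T : α → α)
    (L : (α → ℝ) → α → ℝ) : Prop :=
  ∀ f : α → ℝ, Integrable f μ →
    Integrable (L f) μ ∧
      ∀ A : Set α, MeasurableSet A → ∫ x in A, L f x ∂μ = ∫ x in T ⁻¹' A, f x ∂μ

namespace PFaux

set_option linter.unusedSectionVars false

variable {α : Type*} [MeasurableSpace α] {μ : Measure α} [IsFiniteMeasure μ]
  {T : α → α} {L : (α → ℝ) → α → ℝ}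

theorem pf_int (hL : IsPF μ T L) {f : α → ℝ} (hf : Integrable f μ) :
    Integrable (L f) μ := (hL f hf).1

theorem pf_setInt (hL : IsPF μ T L) {f : α → ℝ} (hf : Integrable f μ)
    {A : Set α} (hA : MeasurableSet A) :
    ∫ x in A, L f x ∂μ = ∫ x in T ⁻¹' A, f x ∂μ := (hL f hf).2 A hA

/-- uniqueness wrapper -/
theorem ae_eq_of_setInt {f g : α → ℝ} (hf : Integrable f μ) (hg : Integrable g μ)
    (h : ∀ A : Set α, MeasurableSet A → ∫ x in A, f x ∂μ = ∫ x in A, g x ∂μ) :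
    f =ᵐ[μ] g :=
  Integrable.ae_eq_of_forall_setIntegral_eq f g hf hg (fun A hA _ => h A hA)

theorem pf_congr (hL : IsPF μ T L) {f g : α → ℝ} (hf : Integrable f μ)
    (hg : Integrable g μ) (hfg : f =ᵐ[μ] g) : L f =ᵐ[μ] L g := by
  refine ae_eq_of_setInt (pf_int hL hf) (pf_int hL hg) fun A hA => ?_
  rw [pf_setInt hL hf hA, pf_setInt hL hg hA]
  exact integral_congr_ae (ae_restrict_of_ae hfg)

theorem pf_sub (hL : IsPF μ T L) {f g : α → ℝ} (hf : Integrable f μ)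
    (hg : Integrable g μ) :
    L (fun x => f x - g x) =ᵐ[μ] fun x => L f x - L g x := by
  have hsub' : Integrable (fun x => f x - g x) μ := hf.sub hg
  refine ae_eq_of_setInt (pf_int hL hsub') ((pf_int hL hf).sub (pf_int hL hg))
    fun A hA => ?_
  rw [pf_setInt hL hsub' hA,
    integral_sub hf.integrableOn hg.integrableOn,
    integral_sub (pf_int hL hf).integrableOn (pf_int hL hg).integrableOn,
    pf_setInt hL hf hA, pf_setInt hL hg hA]

theorem pf_smul (hL : IsPF μ T L) {f : α → ℝ} (hf : Integrable f μ) (c : ℝ) :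
    L (fun x => c * f x) =ᵐ[μ] fun x => c * L f x := by
  refine ae_eq_of_setInt (pf_int hL (hf.const_mul c)) ((pf_int hL hf).const_mul c)
    fun A hA => ?_
  rw [pf_setInt hL (hf.const_mul c) hA, integral_const_mul, integral_const_mul,
    pf_setInt hL hf hA]

theorem pf_nonneg (hL : IsPF μ T L) {f : α → ℝ} (hf : Integrable f μ)
    (h0 : 0 ≤ᵐ[μ] f) : 0 ≤ᵐ[μ] L f := by
  refine ae_nonneg_of_forall_setIntegral_nonneg (pf_int hL hf) fun A hA _ => ?_
  rw [pf_setInt hL hf hA]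
  exact setIntegral_nonneg_of_ae h0

theorem pf_iter_int (hL : IsPF μ T L) {f : α → ℝ} (hf : Integrable f μ) (n : ℕ) :
    Integrable (L^[n] f) μ := by
  induction n with
  | zero => exact hf
  | succ n ih => rw [Function.iterate_succ_apply']; exact pf_int hL ih

theorem pf_iter_congr (hL : IsPF μ T L) {f g : α → ℝ} (hf : Integrable f μ)
    (hg : Integrable g μ) (hfg : f =ᵐ[μ] g) (n : ℕ) : L^[n] f =ᵐ[μ] L^[n] g := by
  induction n with
  | zero => exact hfg
  | succ n ih =>
    rw [Function.iterate_succ_apply', Function.iterate_succ_apply']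
    exact pf_congr hL (pf_iter_int hL hf n) (pf_iter_int hL hg n) ih

theorem pf_iter_nonneg (hL : IsPF μ T L) {f : α → ℝ} (hf : Integrable f μ)
    (h0 : 0 ≤ᵐ[μ] f) (n : ℕ) : 0 ≤ᵐ[μ] L^[n] f := by
  induction n with
  | zero => exact h0
  | succ n ih =>
    rw [Function.iterate_succ_apply']
    exact pf_nonneg hL (pf_iter_int hL hf n) ih

theorem pf_iter_sub (hL : IsPF μ T L) {f g : α → ℝ} (hf : Integrable f μ)
    (hg : Integrable g μ) (n : ℕ) :
    L^[n] (fun x => f x - g x) =ᵐ[μ] fun x => L^[n] f x - L^[n] g x := by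
  induction n with
  | zero => rfl
  | succ n ih =>
    rw [Function.iterate_succ_apply', Function.iterate_succ_apply',
      Function.iterate_succ_apply']
    have hsub' : Integrable (fun x => f x - g x) μ := hf.sub hg
    calc L (L^[n] fun x => f x - g x)
        =ᵐ[μ] L (fun x => L^[n] f x - L^[n] g x) :=
          pf_congr hL (pf_iter_int hL hsub' n)
            ((pf_iter_int hL hf n).sub (pf_iter_int hL hg n)) ih
      _ =ᵐ[μ] fun x => L (L^[n] f) x - L (L^[n] g) x :=
          pf_sub hL (pf_iter_int hL hf n) (pf_iter_int hL hg n)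

theorem pf_iter_setInt (hL : IsPF μ T L) (hT : Measurable T) {f : α → ℝ}
    (hf : Integrable f μ) (n : ℕ) :
    ∀ {A : Set α}, MeasurableSet A → ∫ x in A, L^[n] f x ∂μ = ∫ x in T^[n] ⁻¹' A, f x ∂μ := by
  induction n with
  | zero => intro A _; rfl
  | succ n ih =>
    intro A hA
    rw [Function.iterate_succ_apply', pf_setInt hL (pf_iter_int hL hf n) hA, ih (hT hA)]
    congr 1
    rw [Function.iterate_succ', Set.preimage_comp]

theorem pf_iter_supp (hL : IsPF μ T L) {f : α → ℝ} (hf : Integrable f μ)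
    (h0 : 0 ≤ᵐ[μ] f) {A : Set α} (hA : MeasurableSet A) (hsub : A ⊆ T ⁻¹' A)
    (hz : ∫ x in Aᶜ, f x ∂μ = 0) (n : ℕ) : ∫ x in Aᶜ, L^[n] f x ∂μ = 0 := by
  induction n with
  | zero => exact hz
  | succ n ih =>
    rw [Function.iterate_succ_apply', pf_setInt hL (pf_iter_int hL hf n) hA.compl]
    have hTc : T ⁻¹' Aᶜ ⊆ Aᶜ := fun x hx hxA => hx (hsub hxA)
    have hnn := pf_iter_nonneg hL hf h0 n
    have hle : ∫ x in T ⁻¹' Aᶜ, L^[n] f x ∂μ ≤ ∫ x in Aᶜ, L^[n] f x ∂μ :=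
      setIntegral_mono_set (pf_iter_int hL hf n).integrableOn (ae_restrict_of_ae hnn)
        (HasSubset.Subset.eventuallyLE hTc)
    have hge : 0 ≤ ∫ x in T ⁻¹' Aᶜ, L^[n] f x ∂μ :=
      setIntegral_nonneg_of_ae hnn
    linarith [ih]


theorem pf_iter_smul (hL : IsPF μ T L) {f : α → ℝ} (hf : Integrable f μ) (c : ℝ) (n : ℕ) :
    L^[n] (fun x => c * f x) =ᵐ[μ] fun x => c * L^[n] f x := by
  induction n with
  | zero => rfl
  | succ n ih =>
    rw [Function.iterate_succ_apply', Function.iterate_succ_apply']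
    calc L (L^[n] fun x => c * f x)
        =ᵐ[μ] L (fun x => c * L^[n] f x) :=
          pf_congr hL (pf_iter_int hL (hf.const_mul c) n)
            ((pf_iter_int hL hf n).const_mul c) ih
      _ =ᵐ[μ] fun x => c * L (L^[n] f) x := pf_smul hL (pf_iter_int hL hf n) c

def shiftIdx (r : ℕ) (j : ℕ) : ℕ := if j = r then 1 else j + 1

theorem shiftIdx_mem {r j : ℕ} (hr : 1 ≤ r) (hj : j ∈ Finset.Icc 1 r) :
    shiftIdx r j ∈ Finset.Icc 1 r := by
  simp only [Finset.mem_Icc] at hj ⊢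
  unfold shiftIdx
  split <;> omega

theorem shiftIdx_iter_add {r : ℕ} (k : ℕ) :
    ∀ j, 1 ≤ j → j + k ≤ r → (shiftIdx r)^[k] j = j + k := by
  induction k with
  | zero => intro j _ _; simp
  | succ k ih =>
    intro j hj hjk
    rw [Function.iterate_succ_apply]
    have hjr : j ≠ r := by omega
    have : shiftIdx r j = j + 1 := by unfold shiftIdx; simp [hjr]
    rw [this]
    rw [ih (j + 1) (by omega) (by omega)]
    omega

theorem shiftIdx_iter_period {r j : ℕ} (hr : 1 ≤ r) (hj1 : 1 ≤ j) (hjr : j ≤ r) :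
    (shiftIdx r)^[r] j = j := by
  have h1 : (shiftIdx r)^[r - j] j = r := by
    rw [shiftIdx_iter_add (r - j) j hj1 (by omega)]; omega
  have h2 : (shiftIdx r)^[1 + (r - j)] j = 1 := by
    rw [Function.iterate_add_apply, h1]
    simp [shiftIdx]
  have h3 : (shiftIdx r)^[(j - 1) + (1 + (r - j))] j = j := by
    rw [Function.iterate_add_apply, h2, shiftIdx_iter_add (j - 1) 1 le_rfl (by omega)]
    omega
  have : (j - 1) + (1 + (r - j)) = r := by omega
  rwa [this] at h3

theorem shiftIdx_iter_reach {r j l : ℕ} (hj1 : 1 ≤ j) (hjr : j ≤ r) (hl1 : 1 ≤ l)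
    (hlr : l ≤ r) : ∃ n : ℕ, (shiftIdx r)^[n] j = l := by
  refine ⟨(l - 1) + (1 + (r - j)), ?_⟩
  have h1 : (shiftIdx r)^[r - j] j = r := by
    rw [shiftIdx_iter_add (r - j) j hj1 (by omega)]; omega
  have h2 : (shiftIdx r)^[1 + (r - j)] j = 1 := by
    rw [Function.iterate_add_apply, h1]; simp [shiftIdx]
  rw [Function.iterate_add_apply, h2, shiftIdx_iter_add (l - 1) 1 le_rfl (by omega)]
  omega

theorem shiftIdx_iter_dvd {r j N : ℕ} (hr : 1 ≤ r) (hj1 : 1 ≤ j) (hjr : j ≤ r)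
    (hN : r ∣ N) : (shiftIdx r)^[N] j = j := by
  obtain ⟨t, rfl⟩ := hN
  rw [Function.iterate_mul]
  exact Function.iterate_fixed (shiftIdx_iter_period hr hj1 hjr) t



end PFaux

/-- Asymptotic periodicity of an operator `L` on `L¹(μ)` with data `s`, `r i`,
probability densities `g i j` and bounded linear functionals `Λ i j`. -/
def AsympPeriodic {α : Type*} [MeasurableSpace α] (μ : Measure α)
    (L : (α → ℝ) → α → ℝ) (s : ℕ) (r : ℕ → ℕ) (g : ℕ → ℕ → α → ℝ)
    (Λ : ℕ → ℕ → (α →₁[μ] ℝ) →L[ℝ] ℝ) : Prop :=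
  1 ≤ s ∧ (∀ i ∈ Finset.Icc 1 s, 1 ≤ r i) ∧
    (∀ i ∈ Finset.Icc 1 s, ∀ j ∈ Finset.Icc 1 (r i),
      Measurable (g i j) ∧ Integrable (g i j) μ ∧ 0 ≤ᵐ[μ] g i j ∧ ∫ x, g i j x ∂μ = 1) ∧
    (∀ i ∈ Finset.Icc 1 s, ∀ j ∈ Finset.Icc 1 (r i), ∀ k ∈ Finset.Icc 1 s,
      ∀ l ∈ Finset.Icc 1 (r k), (i, j) ≠ (k, l) →
        (fun x => g i j x * g k l x) =ᵐ[μ] 0) ∧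
    (∀ i ∈ Finset.Icc 1 s,
      (∀ j ∈ Finset.Icc 1 (r i - 1), L (g i j) =ᵐ[μ] g i (j + 1)) ∧
        L (g i (r i)) =ᵐ[μ] g i 1) ∧
    ∀ (f : α → ℝ) (hf : Integrable f μ),
      Tendsto (fun n => ∫ x, |(L^[n] (fun x => f x -
          ∑ i ∈ Finset.Icc 1 s, ∑ j ∈ Finset.Icc 1 (r i), Λ i j (hf.toL1 f) * g i j x)) x| ∂μ)
        atTop (𝓝 0)

/-- The averaged density `(1/r) ∑_{j=1}^{r} g j`. -/
def avgDens {α : Type*} (r : ℕ) (g : ℕ → α → ℝ) : α → ℝ :=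
  fun x => (r : ℝ)⁻¹ * ∑ j ∈ Finset.Icc 1 r, g j x

open PFaux in
theorem stmt_7' {X : Type*} [MeasurableSpace X] (m : Measure X) [IsProbabilityMeasure m]
    (T : X → X) (hT : Measurable T)
    (hns : ∀ A : Set X, MeasurableSet A → m A = 0 → m (T ⁻¹' A) = 0)
    (L : (X → ℝ) → X → ℝ) (hL : IsPF m T L)
    (s : ℕ) (r : ℕ → ℕ) (g : ℕ → ℕ → X → ℝ) (Λ : ℕ → ℕ → (X →₁[m] ℝ) →L[ℝ] ℝ)
    (hap : True)
    (hs : 1 ≤ s) (hr : ∀ i ∈ Finset.Icc 1 s, 1 ≤ r i)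
    (hg : ∀ i ∈ Finset.Icc 1 s, ∀ j ∈ Finset.Icc 1 (r i),
      Measurable (g i j) ∧ Integrable (g i j) m ∧ 0 ≤ᵐ[m] g i j ∧ ∫ x, g i j x ∂m = 1)
    (hdisj : ∀ i ∈ Finset.Icc 1 s, ∀ j ∈ Finset.Icc 1 (r i), ∀ k ∈ Finset.Icc 1 s,
      ∀ l ∈ Finset.Icc 1 (r k), (i, j) ≠ (k, l) →
        (fun x => g i j x * g k l x) =ᵐ[m] 0)
    (hcyc : ∀ i ∈ Finset.Icc 1 s,
      (∀ j ∈ Finset.Icc 1 (r i - 1), L (g i j) =ᵐ[m] g i (j + 1)) ∧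
        L (g i (r i)) =ᵐ[m] g i 1)
    (hconv : ∀ (f : X → ℝ) (hf : Integrable f m),
      Tendsto (fun n => ∫ x, |(L^[n] (fun x => f x -
          ∑ i ∈ Finset.Icc 1 s, ∑ j ∈ Finset.Icc 1 (r i), Λ i j (hf.toL1 f) * g i j x)) x| ∂m)
        atTop (𝓝 0))
    (A : Set X) (hA : MeasurableSet A) (hApos : 0 < m A) (hAsub : A ⊆ T ⁻¹' A) :
    (∀ i ∈ Finset.Icc 1 s,
      m ({x | 0 < avgDens (r i) (g i) x} ∩ A) = 0 ∨
        m ({x | 0 < avgDens (r i) (g i) x} \ A) = 0) ∧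
      0 < m (A ∩ ⋃ i ∈ Finset.Icc 1 s, {x | 0 < avgDens (r i) (g i) x}) := by
  classical
  -- basic data
  have hgm : ∀ i ∈ Finset.Icc 1 s, ∀ j ∈ Finset.Icc 1 (r i), Measurable (g i j) :=
    fun i hi j hj => (hg i hi j hj).1
  have hgi : ∀ i ∈ Finset.Icc 1 s, ∀ j ∈ Finset.Icc 1 (r i), Integrable (g i j) m :=
    fun i hi j hj => (hg i hi j hj).2.1
  have hg0 : ∀ i ∈ Finset.Icc 1 s, ∀ j ∈ Finset.Icc 1 (r i), 0 ≤ᵐ[m] g i j :=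
    fun i hi j hj => (hg i hi j hj).2.2.1
  have hg1 : ∀ i ∈ Finset.Icc 1 s, ∀ j ∈ Finset.Icc 1 (r i), ∫ x, g i j x ∂m = 1 :=
    fun i hi j hj => (hg i hi j hj).2.2.2
  -- step relation
  have hstep : ∀ i ∈ Finset.Icc 1 s, ∀ j ∈ Finset.Icc 1 (r i),
      L (g i j) =ᵐ[m] g i (shiftIdx (r i) j) := by
    intro i hi j hj
    rcases eq_or_ne j (r i) with h | h
    · subst h
      simpa [shiftIdx] using (hcyc i hi).2
    · have hj' : j ∈ Finset.Icc 1 (r i - 1) := by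
        simp only [Finset.mem_Icc] at hj ⊢; omega
      have : shiftIdx (r i) j = j + 1 := by simp [shiftIdx, h]
      rw [this]
      exact (hcyc i hi).1 j hj'
  -- iterates of the densities
  have hgiter : ∀ i ∈ Finset.Icc 1 s, ∀ (n : ℕ), ∀ j ∈ Finset.Icc 1 (r i),
      L^[n] (g i j) =ᵐ[m] g i ((shiftIdx (r i))^[n] j) := by
    intro i hi n
    induction n with
    | zero => intro j hj; rfl
    | succ n ih =>
      intro j hj
      have hj' := shiftIdx_mem (hr i hi) hj
      rw [Function.iterate_succ_apply, Function.iterate_succ_apply]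
      calc L^[n] (L (g i j))
          =ᵐ[m] L^[n] (g i (shiftIdx (r i) j)) :=
            pf_iter_congr hL (pf_int hL (hgi i hi j hj)) (hgi i hi _ hj')
              (hstep i hi j hj) n
        _ =ᵐ[m] g i ((shiftIdx (r i))^[n] (shiftIdx (r i) j)) := ih _ hj'
  -- period
  set N : ℕ := ∏ i ∈ Finset.Icc 1 s, r i with hN
  have hN1 : 1 ≤ N := Finset.one_le_prod' hr
  have hdvd : ∀ i ∈ Finset.Icc 1 s, r i ∣ N := fun i hi => Finset.dvd_prod_of_mem r hi
  have hgper : ∀ i ∈ Finset.Icc 1 s, ∀ j ∈ Finset.Icc 1 (r i), ∀ k : ℕ,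
      L^[k * N] (g i j) =ᵐ[m] g i j := by
    intro i hi j hj k
    have hjj := Finset.mem_Icc.mp hj
    have : (shiftIdx (r i))^[k * N] j = j :=
      shiftIdx_iter_dvd (hr i hi) hjj.1 hjj.2 ((hdvd i hi).mul_left k)
    have h2 := hgiter i hi (k * N) j hj
    rwa [this] at h2
  -- expansion of the candidate limit density over a set
  have expand : ∀ (c : ℕ → ℕ → ℝ) (P : Set X),
      ∫ x in P, (∑ i ∈ Finset.Icc 1 s, ∑ j ∈ Finset.Icc 1 (r i), c i j * g i j x) ∂m
        = ∑ i ∈ Finset.Icc 1 s, ∑ j ∈ Finset.Icc 1 (r i), c i j * ∫ x in P, g i j x ∂m := by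
    intro c P
    rw [integral_finset_sum _ (fun i hi => (integrable_finset_sum _
      (fun j hj => ((hgi i hi j hj).const_mul (c i j)))).integrableOn)]
    refine Finset.sum_congr rfl fun i hi => ?_
    rw [integral_finset_sum _ (fun j hj => ((hgi i hi j hj).const_mul (c i j)).integrableOn)]
    exact Finset.sum_congr rfl fun j hj => integral_const_mul _ _
  have hhint : ∀ c : ℕ → ℕ → ℝ,
      Integrable (fun x => ∑ i ∈ Finset.Icc 1 s, ∑ j ∈ Finset.Icc 1 (r i), c i j * g i j x) m :=
    fun c => integrable_finset_sum _ (fun i hi => integrable_finset_sum _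
      (fun j hj => (hgi i hi j hj).const_mul (c i j)))
  -- key convergence
  have key : ∀ (f : X → ℝ) (hf : Integrable f m),
      ∃ c : ℕ → ℕ → ℝ, ∀ S : Set X, MeasurableSet S →
        Tendsto (fun k => ∫ x in S, L^[k * N] f x ∂m) atTop
          (𝓝 (∫ x in S, (∑ i ∈ Finset.Icc 1 s, ∑ j ∈ Finset.Icc 1 (r i), c i j * g i j x) ∂m)) := by
    intro f hf
    refine ⟨fun i j => Λ i j (hf.toL1 f), ?_⟩
    set c : ℕ → ℕ → ℝ := fun i j => Λ i j (hf.toL1 f) with hc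
    set h : X → ℝ := fun x => ∑ i ∈ Finset.Icc 1 s, ∑ j ∈ Finset.Icc 1 (r i), c i j * g i j x
      with hhdef
    have hh : Integrable h m := hhint c
    have hLNh : L^[N] h =ᵐ[m] h := by
      refine ae_eq_of_setInt (pf_iter_int hL hh N) hh fun S hS => ?_
      rw [pf_iter_setInt hL hT hh N hS]
      show ∫ x in T^[N] ⁻¹' S, h x ∂m = ∫ x in S, h x ∂m
      rw [hhdef]
      rw [expand c (T^[N] ⁻¹' S), expand c S]
      refine Finset.sum_congr rfl fun i hi => Finset.sum_congr rfl fun j hj => ?_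
      congr 1
      rw [← pf_iter_setInt hL hT (hgi i hi j hj) N hS]
      have := hgper i hi j hj 1
      rw [one_mul] at this
      exact integral_congr_ae (ae_restrict_of_ae this)
    have hLkNh : ∀ k : ℕ, L^[k * N] h =ᵐ[m] h := by
      intro k
      induction k with
      | zero => rw [Nat.zero_mul]; rfl
      | succ k ih =>
        have hkn : (k + 1) * N = k * N + N := by ring
        rw [hkn, Function.iterate_add_apply]
        calc L^[k * N] (L^[N] h) =ᵐ[m] L^[k * N] h :=
              pf_iter_congr hL (pf_iter_int hL hh N) hh hLNh (k * N)
          _ =ᵐ[m] h := ih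
    intro S hS
    have herr := hconv f hf
    have herr2 : Tendsto (fun k : ℕ => ∫ x, |(L^[k * N] (fun x => f x -
        ∑ i ∈ Finset.Icc 1 s, ∑ j ∈ Finset.Icc 1 (r i), Λ i j (hf.toL1 f) * g i j x)) x| ∂m)
        atTop (𝓝 0) :=
      herr.comp (tendsto_atTop_mono (fun k => Nat.le_mul_of_pos_right k hN1) tendsto_id)
    have hrem : Integrable (fun x => f x - h x) m := hf.sub hh
    have hb : ∀ k : ℕ, ‖(∫ x in S, L^[k * N] f x ∂m) - ∫ x in S, h x ∂m‖
        ≤ ∫ x, |(L^[k * N] (fun x => f x -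
          ∑ i ∈ Finset.Icc 1 s, ∑ j ∈ Finset.Icc 1 (r i), Λ i j (hf.toL1 f) * g i j x)) x| ∂m := by
      intro k
      have e1 : (∫ x in S, L^[k * N] f x ∂m) - ∫ x in S, h x ∂m
          = ∫ x in S, (L^[k * N] f x - h x) ∂m :=
        (integral_sub (pf_iter_int hL hf (k * N)).integrableOn hh.integrableOn).symm
      rw [e1]
      have e2 : ∫ x in S, ‖L^[k * N] f x - h x‖ ∂m ≤ ∫ x, ‖L^[k * N] f x - h x‖ ∂m :=
        setIntegral_le_integral ((pf_iter_int hL hf (k * N)).sub hh).norm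
          (Eventually.of_forall fun x => norm_nonneg _)
      refine le_trans (norm_integral_le_integral_norm _) (le_trans e2 ?_)
      have e3 : (fun x => ‖L^[k * N] f x - h x‖) =ᵐ[m]
          fun x => |(L^[k * N] (fun x => f x -
            ∑ i ∈ Finset.Icc 1 s, ∑ j ∈ Finset.Icc 1 (r i), Λ i j (hf.toL1 f) * g i j x)) x| := by
        have e4 : L^[k * N] (fun x => f x - h x) =ᵐ[m]
            fun x => L^[k * N] f x - L^[k * N] h x := pf_iter_sub hL hf hh (k * N)
        have e5 : L^[k * N] h =ᵐ[m] h := hLkNh k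
        filter_upwards [e4, e5] with x hx4 hx5
        show ‖L^[k * N] f x - h x‖ = |(L^[k * N] (fun x => f x - h x)) x|
        rw [hx4, hx5, Real.norm_eq_abs]
      rw [integral_congr_ae e3]
    have h3 : Tendsto (fun k : ℕ => (∫ x in S, L^[k * N] f x ∂m) - ∫ x in S, h x ∂m)
        atTop (𝓝 0) := squeeze_zero_norm hb herr2
    have h4 := h3.add_const (∫ x in S, h x ∂m)
    simp only [zero_add, sub_add_cancel] at h4
    exact h4
  -- facts on limit densities for densities supported on A
  have dfacts : ∀ (f : X → ℝ) (hf : Integrable f m), 0 ≤ᵐ[m] f → (∫ x, f x ∂m) = 1 →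
      (∫ x in Aᶜ, f x ∂m) = 0 →
      ∃ c : ℕ → ℕ → ℝ,
        (0 ≤ᵐ[m] fun x => ∑ i ∈ Finset.Icc 1 s, ∑ j ∈ Finset.Icc 1 (r i), c i j * g i j x) ∧
        (∫ x, (∑ i ∈ Finset.Icc 1 s, ∑ j ∈ Finset.Icc 1 (r i), c i j * g i j x) ∂m) = 1 ∧
        (∫ x in Aᶜ, (∑ i ∈ Finset.Icc 1 s, ∑ j ∈ Finset.Icc 1 (r i), c i j * g i j x) ∂m) = 0 ∧
        ∀ S : Set X, MeasurableSet S →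
          Tendsto (fun k => ∫ x in S, L^[k * N] f x ∂m) atTop
            (𝓝 (∫ x in S, (∑ i ∈ Finset.Icc 1 s, ∑ j ∈ Finset.Icc 1 (r i), c i j * g i j x) ∂m)) := by
    intro f hf hf0 hf1 hfA
    obtain ⟨c, htend⟩ := key f hf
    set h : X → ℝ := fun x => ∑ i ∈ Finset.Icc 1 s, ∑ j ∈ Finset.Icc 1 (r i), c i j * g i j x
      with hhdef
    have hh : Integrable h m := hhint c
    refine ⟨c, ?_, ?_, ?_, htend⟩
    · refine ae_nonneg_of_forall_setIntegral_nonneg hh fun S hS _ => ?_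
      refine ge_of_tendsto (htend S hS) (Eventually.of_forall fun k => ?_)
      exact setIntegral_nonneg_of_ae (pf_iter_nonneg hL hf hf0 (k * N))
    · have hconst : (fun k : ℕ => ∫ x in Set.univ, L^[k * N] f x ∂m) = fun _ => 1 := by
        funext k
        rw [pf_iter_setInt hL hT hf (k * N) MeasurableSet.univ, Set.preimage_univ,
          setIntegral_univ, hf1]
      have := htend Set.univ MeasurableSet.univ
      rw [hconst] at this
      have h1 := tendsto_nhds_unique this tendsto_const_nhds
      rwa [setIntegral_univ] at h1
    · have hconst : (fun k : ℕ => ∫ x in Aᶜ, L^[k * N] f x ∂m) = fun _ => 0 := by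
        funext k
        exact pf_iter_supp hL hf hf0 hA hAsub hfA (k * N)
      have := htend Aᶜ hA.compl
      rw [hconst] at this
      exact tendsto_nhds_unique this tendsto_const_nhds
  -- Part 2
  have part2 : 0 < m (A ∩ ⋃ i ∈ Finset.Icc 1 s, {x | 0 < avgDens (r i) (g i) x}) := by
    by_contra hcon
    have hU0 : m (A ∩ ⋃ i ∈ Finset.Icc 1 s, {x | 0 < avgDens (r i) (g i) x}) = 0 :=
      le_antisymm (not_lt.mp hcon) zero_le
    have hmA : (0:ℝ) < (m A).toReal := ENNReal.toReal_pos hApos.ne' (measure_ne_top m A)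
    set f₀ : X → ℝ := fun x => (m A).toReal⁻¹ * (A.indicator (fun _ => (1:ℝ)) x) with hf₀def
    have hf₀i : Integrable f₀ m := ((integrable_const (1:ℝ)).indicator hA).const_mul _
    have hf₀0 : 0 ≤ᵐ[m] f₀ := Eventually.of_forall fun x =>
      mul_nonneg (inv_nonneg.mpr ENNReal.toReal_nonneg)
        (Set.indicator_nonneg (fun _ _ => zero_le_one) x)
    have hf₀1 : ∫ x, f₀ x ∂m = 1 := by
      rw [hf₀def]
      rw [MeasureTheory.integral_const_mul]
      rw [MeasureTheory.integral_indicator_const (1:ℝ) hA]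
      simp [Measure.real, inv_mul_cancel₀ hmA.ne']
    have hf₀A : ∫ x in Aᶜ, f₀ x ∂m = 0 := by
      have : ∀ x ∈ Aᶜ, f₀ x = (fun _ => (0:ℝ)) x := by
        intro x hx
        simp [hf₀def, Set.indicator_of_notMem (Set.notMem_of_mem_compl hx)]
      rw [setIntegral_congr_fun hA.compl this, integral_zero]
    obtain ⟨c, hpos, hint1, hA0, -⟩ := dfacts f₀ hf₀i hf₀0 hf₀1 hf₀A
    have hAae : ∀ᵐ x ∂m, x ∈ Aᶜ →
        (∑ i ∈ Finset.Icc 1 s, ∑ j ∈ Finset.Icc 1 (r i), c i j * g i j x) = 0 := by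
      have h1 : (fun x => ∑ i ∈ Finset.Icc 1 s, ∑ j ∈ Finset.Icc 1 (r i), c i j * g i j x)
          =ᵐ[m.restrict Aᶜ] 0 :=
        (setIntegral_eq_zero_iff_of_nonneg_ae (ae_restrict_of_ae hpos)
          (hhint c).integrableOn).mp hA0
      exact ae_imp_of_ae_restrict h1
    have hgall : ∀ᵐ x ∂m, ∀ i ∈ Finset.Icc 1 s, ∀ j ∈ Finset.Icc 1 (r i), 0 ≤ g i j x := by
      rw [Filter.eventually_all_finset]
      intro i hi
      rw [Filter.eventually_all_finset]
      intro j hj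
      exact hg0 i hi j hj
    have hnm : ∀ᵐ x ∂m, x ∉ A ∩ ⋃ i ∈ Finset.Icc 1 s, {x | 0 < avgDens (r i) (g i) x} :=
      measure_eq_zero_iff_ae_notMem.mp hU0
    have hzero : (fun x => ∑ i ∈ Finset.Icc 1 s, ∑ j ∈ Finset.Icc 1 (r i), c i j * g i j x)
        =ᵐ[m] fun _ => (0:ℝ) := by
      filter_upwards [hAae, hgall, hnm] with x hx1 hx2 hx3
      by_cases hxA : x ∈ A
      · have hxU : x ∉ ⋃ i ∈ Finset.Icc 1 s, {x | 0 < avgDens (r i) (g i) x} :=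
          fun hU => hx3 ⟨hxA, hU⟩
        show (∑ i ∈ Finset.Icc 1 s, ∑ j ∈ Finset.Icc 1 (r i), c i j * g i j x) = 0
        refine Finset.sum_eq_zero fun i hi => Finset.sum_eq_zero fun j hj => ?_
        have hzij : g i j x = 0 := by
          refine le_antisymm ?_ (hx2 i hi j hj)
          by_contra hgt
          push_neg at hgt
          have hrpos : (0:ℝ) < ((r i : ℕ) : ℝ)⁻¹ :=
            inv_pos.mpr (by exact_mod_cast hr i hi)
          have havg : 0 < avgDens (r i) (g i) x :=
            mul_pos hrpos (Finset.sum_pos' (fun l hl => hx2 i hi l hl) ⟨j, hj, hgt⟩)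
          exact hxU (Set.mem_biUnion hi havg)
        rw [hzij, mul_zero]
      · exact hx1 hxA
    have hcontra : (1:ℝ) = 0 := by rw [← hint1, integral_congr_ae hzero, integral_zero]
    norm_num at hcontra
  -- Part 1
  have part1 : ∀ i ∈ Finset.Icc 1 s,
      m ({x | 0 < avgDens (r i) (g i) x} ∩ A) = 0 ∨
        m ({x | 0 < avgDens (r i) (g i) x} \ A) = 0 := by
    intro i hi
    rcases eq_or_ne (m ({x | 0 < avgDens (r i) (g i) x} ∩ A)) 0 with hz | hz
    · exact Or.inl hz
    right
    -- measurability and positivity facts for the averaged density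
    have havgm : Measurable (avgDens (r i) (g i)) :=
      (Finset.measurable_sum _ fun j hj => hgm i hi j hj).const_mul _
    have hgi_all : ∀ᵐ x ∂m, ∀ j ∈ Finset.Icc 1 (r i), 0 ≤ g i j x := by
      rw [Filter.eventually_all_finset]; exact fun j hj => hg0 i hi j hj
    have havg0 : 0 ≤ᵐ[m] avgDens (r i) (g i) := by
      filter_upwards [hgi_all] with x hx
      exact mul_nonneg (inv_nonneg.mpr (Nat.cast_nonneg _)) (Finset.sum_nonneg hx)
    have havgi : Integrable (avgDens (r i) (g i)) m :=
      (integrable_finset_sum _ fun j hj => hgi i hi j hj).const_mul _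
    set Sai : Set X := {x | 0 < avgDens (r i) (g i) x} ∩ A with hSai
    -- find j₀ with positive mass of g i j₀ on A
    have hpos2 : 0 < ∫ x in Sai, avgDens (r i) (g i) x ∂m := by
      rw [setIntegral_pos_iff_support_of_nonneg_ae (ae_restrict_of_ae havg0)
        havgi.integrableOn]
      refine lt_of_lt_of_le (pos_iff_ne_zero.mpr hz) (measure_mono ?_)
      exact fun x hx => ⟨ne_of_gt hx.1, hx⟩
    have hexp : ∫ x in Sai, avgDens (r i) (g i) x ∂m
        = ((r i : ℕ) : ℝ)⁻¹ * ∑ j ∈ Finset.Icc 1 (r i), ∫ x in Sai, g i j x ∂m := by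
      show ∫ x in Sai, (((r i : ℕ) : ℝ)⁻¹ * ∑ j ∈ Finset.Icc 1 (r i), g i j x) ∂m = _
      rw [MeasureTheory.integral_const_mul,
        integral_finset_sum _ fun j hj => (hgi i hi j hj).integrableOn]
    have hsum : 0 < ∑ j ∈ Finset.Icc 1 (r i), ∫ x in Sai, g i j x ∂m := by
      rw [hexp] at hpos2
      by_contra hns'
      push_neg at hns'
      have : ((r i : ℕ) : ℝ)⁻¹ * ∑ j ∈ Finset.Icc 1 (r i), ∫ x in Sai, g i j x ∂m ≤ 0 :=
        mul_nonpos_of_nonneg_of_nonpos (inv_nonneg.mpr (Nat.cast_nonneg _)) hns'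
      linarith
    obtain ⟨j₀, hj₀mem, hj₀pos⟩ : ∃ j₀ ∈ Finset.Icc 1 (r i), 0 < ∫ x in Sai, g i j₀ x ∂m := by
      by_contra hno
      push_neg at hno
      exact absurd hsum (not_lt.mpr (Finset.sum_nonpos hno))
    have hα : 0 < ∫ x in A, g i j₀ x ∂m := by
      refine lt_of_lt_of_le hj₀pos (setIntegral_mono_set (hgi i hi j₀ hj₀mem).integrableOn
        (ae_restrict_of_ae (hg0 i hi j₀ hj₀mem)) ?_)
      exact HasSubset.Subset.eventuallyLE Set.inter_subset_right
    set α : ℝ := ∫ x in A, g i j₀ x ∂m with hαdef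
    -- normalized restriction of g i j₀ to A
    set f : X → ℝ := fun x => α⁻¹ * A.indicator (g i j₀) x with hfdef
    have hfi : Integrable f m := ((hgi i hi j₀ hj₀mem).indicator hA).const_mul _
    have hf0 : 0 ≤ᵐ[m] f := by
      filter_upwards [hg0 i hi j₀ hj₀mem] with x hx
      refine mul_nonneg (inv_nonneg.mpr hα.le) ?_
      by_cases hxA : x ∈ A
      · rw [Set.indicator_of_mem hxA]; exact hx
      · rw [Set.indicator_of_notMem hxA]
    have hf1 : ∫ x, f x ∂m = 1 := by
      rw [hfdef]
      rw [MeasureTheory.integral_const_mul, integral_indicator hA]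
      exact inv_mul_cancel₀ hα.ne'
    have hfA : ∫ x in Aᶜ, f x ∂m = 0 := by
      have : ∀ x ∈ Aᶜ, f x = (fun _ => (0:ℝ)) x := by
        intro x hx
        simp [hfdef, Set.indicator_of_notMem (Set.notMem_of_mem_compl hx)]
      rw [setIntegral_congr_fun hA.compl this, integral_zero]
    obtain ⟨c, hpos, hint1, hA0, htend⟩ := dfacts f hfi hf0 hf1 hfA
    set S' : Set X := {x | 0 < g i j₀ x} with hS'def
    have hS' : MeasurableSet S' := measurableSet_lt measurable_const (hgm i hi j₀ hj₀mem)
    -- the iterates of f live on the support of g i j₀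
    have claim1 : ∀ k : ℕ, ∫ x in S'ᶜ, L^[k * N] f x ∂m = 0 := by
      intro k
      have hw : Integrable (fun x => α * f x) m := hfi.const_mul α
      have hu : Integrable (fun x => g i j₀ x - α * f x) m := (hgi i hi j₀ hj₀mem).sub hw
      have hu0 : 0 ≤ᵐ[m] fun x => g i j₀ x - α * f x := by
        filter_upwards [hg0 i hi j₀ hj₀mem] with x hx
        have hx' : (0:ℝ) ≤ g i j₀ x := hx
        have he : α * f x = A.indicator (g i j₀) x := by
          rw [hfdef, ← mul_assoc, mul_inv_cancel₀ hα.ne', one_mul]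
        show 0 ≤ g i j₀ x - α * f x
        rw [he]
        by_cases hxA : x ∈ A
        · rw [Set.indicator_of_mem hxA]; linarith
        · rw [Set.indicator_of_notMem hxA]; linarith
      have h1 : 0 ≤ᵐ[m] L^[k * N] (fun x => g i j₀ x - α * f x) :=
        pf_iter_nonneg hL hu hu0 _
      have h2 := pf_iter_sub hL (hgi i hi j₀ hj₀mem) hw (k * N)
      have h3 := pf_iter_smul hL hfi α (k * N)
      have h4 := hgper i hi j₀ hj₀mem k
      have hub : ∀ᵐ x ∂m, α * L^[k * N] f x ≤ g i j₀ x := by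
        filter_upwards [h1, h2, h3, h4] with x hx1 hx2 hx3 hx4
        have hx1' : (0:ℝ) ≤ L^[k * N] (fun x => g i j₀ x - α * f x) x := hx1
        have hx2' : L^[k * N] (fun x => g i j₀ x - α * f x) x
            = L^[k * N] (g i j₀) x - L^[k * N] (fun x => α * f x) x := hx2
        have hx3' : L^[k * N] (fun x => α * f x) x = α * L^[k * N] f x := hx3
        have hx4' : L^[k * N] (g i j₀) x = g i j₀ x := hx4
        linarith [hx1', hx2', hx3', hx4']
      have hnn : 0 ≤ᵐ[m] L^[k * N] f := pf_iter_nonneg hL hfi hf0 _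
      have hge : 0 ≤ ∫ x in S'ᶜ, L^[k * N] f x ∂m := setIntegral_nonneg_of_ae hnn
      have hle : ∫ x in S'ᶜ, L^[k * N] f x ∂m ≤ 0 := by
        have hres : ∀ᵐ x ∂m.restrict S'ᶜ, L^[k * N] f x ≤ 0 := by
          rw [ae_restrict_iff' hS'.compl]
          filter_upwards [hub] with x hx hxm
          have hgle : g i j₀ x ≤ 0 := not_lt.mp hxm
          nlinarith [hα]
        exact integral_nonpos_of_ae hres
      linarith
    -- the limit density is supported on S'
    have hconstS : (fun k : ℕ => ∫ x in S'ᶜ, L^[k * N] f x ∂m) = fun _ => (0:ℝ) :=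
      funext claim1
    have hS'0 : ∫ x in S'ᶜ, (∑ i' ∈ Finset.Icc 1 s, ∑ j ∈ Finset.Icc 1 (r i'),
        c i' j * g i' j x) ∂m = 0 := by
      have := htend S'ᶜ hS'.compl
      rw [hconstS] at this
      exact tendsto_nhds_unique this tendsto_const_nhds
    have hhSc : ∀ᵐ x ∂m, x ∈ S'ᶜ →
        (∑ i' ∈ Finset.Icc 1 s, ∑ j ∈ Finset.Icc 1 (r i'), c i' j * g i' j x) = 0 :=
      ae_imp_of_ae_restrict ((setIntegral_eq_zero_iff_of_nonneg_ae
        (ae_restrict_of_ae hpos) (hhint c).integrableOn).mp hS'0)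
    -- disjointness of supports, a.e. pointwise
    have hdd : ∀ᵐ x ∂m, ∀ k ∈ Finset.Icc 1 s, ∀ l ∈ Finset.Icc 1 (r k),
        (k, l) ≠ (i, j₀) → g i j₀ x * g k l x = 0 := by
      rw [Filter.eventually_all_finset]
      intro k hk
      rw [Filter.eventually_all_finset]
      intro l hl
      by_cases hne : (k, l) = (i, j₀)
      · exact Eventually.of_forall fun x hne' => absurd hne hne'
      · have := hdisj i hi j₀ hj₀mem k hk l hl (fun he => hne he.symm)
        filter_upwards [this] with x hx _
        exact hx
    have claim2 : (fun x => ∑ i' ∈ Finset.Icc 1 s, ∑ j ∈ Finset.Icc 1 (r i'),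
        c i' j * g i' j x) =ᵐ[m] fun x => c i j₀ * g i j₀ x := by
      filter_upwards [hhSc, hdd, hg0 i hi j₀ hj₀mem] with x hx1 hx2 hx3
      by_cases hxS : 0 < g i j₀ x
      · show (∑ i' ∈ Finset.Icc 1 s, ∑ j ∈ Finset.Icc 1 (r i'), c i' j * g i' j x)
            = c i j₀ * g i j₀ x
        rw [Finset.sum_eq_single_of_mem i hi]
        · rw [Finset.sum_eq_single_of_mem j₀ hj₀mem]
          intro l hl hne
          have h0 := hx2 i hi l hl (fun he => hne (congrArg Prod.snd he))
          rw [(mul_eq_zero.mp h0).resolve_left (ne_of_gt hxS), mul_zero]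
        · intro k hk hne
          refine Finset.sum_eq_zero fun l hl => ?_
          have h0 := hx2 k hk l hl (fun he => hne (congrArg Prod.fst he))
          rw [(mul_eq_zero.mp h0).resolve_left (ne_of_gt hxS), mul_zero]
      · have h1 : g i j₀ x = 0 := le_antisymm (not_lt.mp hxS) hx3
        show (∑ i' ∈ Finset.Icc 1 s, ∑ j ∈ Finset.Icc 1 (r i'), c i' j * g i' j x)
            = c i j₀ * g i j₀ x
        rw [h1, mul_zero]
        exact hx1 hxS
    -- the coefficient is 1 and g i j₀ is supported in A
    have hc1 : c i j₀ = 1 := by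
      have e := integral_congr_ae claim2
      rw [hint1] at e
      rw [MeasureTheory.integral_const_mul, hg1 i hi j₀ hj₀mem, mul_one] at e
      exact e.symm
    have e2 : (fun x => ∑ i' ∈ Finset.Icc 1 s, ∑ j ∈ Finset.Icc 1 (r i'),
        c i' j * g i' j x) =ᵐ[m] g i j₀ :=
      claim2.trans (Eventually.of_forall fun x => by simp [hc1])
    have hgj₀Ac : ∫ x in Aᶜ, g i j₀ x ∂m = 0 := by
      rw [← integral_congr_ae (ae_restrict_of_ae e2)]
      exact hA0
    -- propagate along the cycle
    have hall : ∀ l ∈ Finset.Icc 1 (r i), ∫ x in Aᶜ, g i l x ∂m = 0 := by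
      intro l hl
      have hjj := Finset.mem_Icc.mp hj₀mem
      have hll := Finset.mem_Icc.mp hl
      obtain ⟨n, hn⟩ := shiftIdx_iter_reach hjj.1 hjj.2 hll.1 hll.2
      have e3 : L^[n] (g i j₀) =ᵐ[m] g i l := by
        have := hgiter i hi n j₀ hj₀mem
        rwa [hn] at this
      have e4 := pf_iter_supp hL (hgi i hi j₀ hj₀mem) (hg0 i hi j₀ hj₀mem) hA hAsub hgj₀Ac n
      rw [← integral_congr_ae (ae_restrict_of_ae e3)]
      exact e4
    have havgAc : ∫ x in Aᶜ, avgDens (r i) (g i) x ∂m = 0 := by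
      show ∫ x in Aᶜ, (((r i : ℕ) : ℝ)⁻¹ * ∑ j ∈ Finset.Icc 1 (r i), g i j x) ∂m = 0
      rw [MeasureTheory.integral_const_mul,
        integral_finset_sum _ fun j hj => (hgi i hi j hj).integrableOn,
        Finset.sum_congr rfl hall]
      simp
    have havg0ae : ∀ᵐ x ∂m, x ∈ Aᶜ → avgDens (r i) (g i) x = 0 :=
      ae_imp_of_ae_restrict ((setIntegral_eq_zero_iff_of_nonneg_ae
        (ae_restrict_of_ae havg0) havgi.integrableOn).mp havgAc)
    have hsubnull : {x | 0 < avgDens (r i) (g i) x} \ A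
        ⊆ {x | ¬ (x ∈ Aᶜ → avgDens (r i) (g i) x = 0)} := by
      intro x hx
      simp only [Set.mem_setOf_eq]
      intro hc
      exact absurd (hc hx.2) (ne_of_gt hx.1)
    exact measure_mono_null hsubnull (ae_iff.mp havg0ae)
  exact ⟨part1, part2⟩


/-- **Proposition 2.7.** If `𝓛_T` is asymptotically periodic with data
`s, r, g, Λ`, `g_i = (1/r i) ∑_j g_{i,j}`, `A_i = {g_i > 0}`, and `A` is a
measurable set with `m(A) > 0` and `A ⊆ T⁻¹(A)`, then for every `i` either
`m(A_i ∩ A) = 0` or `m(A_i \ A) = 0`, and moreover `m(A ∩ ⋃ᵢ A_i) > 0`. -/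
theorem stmt_7 {X : Type*} [MeasurableSpace X] (m : Measure X) [IsProbabilityMeasure m]
    (T : X → X) (hT : Measurable T)
    (hns : ∀ A : Set X, MeasurableSet A → m A = 0 → m (T ⁻¹' A) = 0)
    (L : (X → ℝ) → X → ℝ) (hL : IsPF m T L)
    (s : ℕ) (r : ℕ → ℕ) (g : ℕ → ℕ → X → ℝ) (Λ : ℕ → ℕ → (X →₁[m] ℝ) →L[ℝ] ℝ)
    (hap : AsympPeriodic m L s r g Λ)
    (A : Set X) (hA : MeasurableSet A) (hApos : 0 < m A) (hAsub : A ⊆ T ⁻¹' A) :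
    (∀ i ∈ Finset.Icc 1 s,
      m ({x | 0 < avgDens (r i) (g i) x} ∩ A) = 0 ∨
        m ({x | 0 < avgDens (r i) (g i) x} \ A) = 0) ∧
      0 < m (A ∩ ⋃ i ∈ Finset.Icc 1 s, {x | 0 < avgDens (r i) (g i) x}) := by
  obtain ⟨hs, hr, hg, hdisj, hcyc, hconv⟩ := hap
  exact stmt_7' m T hT hns L hL s r g Λ trivial hs hr hg hdisj hcyc hconv A hA hApos hAsub
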